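/- Let m ≥ 1, let (x₁,…,x_m) be an m-tuple of nonnegative real numbers, and let k ≥ 1 be a natural number. Then h_{k+1}(x₁,…,x_m)² ≥ h_k(x₁,…,x_m) · h_{k+2}(x₁,…,x_m); that is, the sequence of complete homogeneous symmetric polynomials evaluated at nonnegative reals is log-concave. -/

import Mathlib

/-- `hpoly m k x` is the complete homogeneous symmetric polynomial
`h_k(x₁,…,x_m) = ∑_{1 ≤ j₁ ≤ ⋯ ≤ j_k ≤ m} x_{j₁} ⋯ x_{j_k}`, the sum being over all
nondecreasing `k`-tuples of indices (equivalently, all multisets of size `k`). -/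
noncomputable def hpoly (m k : ℕ) (x : Fin m → ℝ) : ℝ :=
  ∑ f : {f : Fin k → Fin m // Monotone f}, ∏ i : Fin k, x (f.1 i)


lemma hpoly_nonneg (m k : ℕ) (x : Fin m → ℝ) (hx : ∀ i, 0 ≤ x i) : 0 ≤ hpoly m k x :=
  Finset.sum_nonneg fun f _ => Finset.prod_nonneg fun i _ => hx _

lemma hpoly_zero (m : ℕ) (x : Fin m → ℝ) : hpoly m 0 x = 1 := by
  haveI : Unique {f : Fin 0 → Fin m // Monotone f} :=
    ⟨⟨⟨Fin.elim0, fun i => i.elim0⟩⟩, fun f => Subtype.ext (funext fun i => i.elim0)⟩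
  simp [hpoly]

lemma hpoly_zero_vars (k : ℕ) (x : Fin 0 → ℝ) : hpoly 0 (k+1) x = 0 := by
  haveI : IsEmpty {f : Fin (k+1) → Fin 0 // Monotone f} :=
    ⟨fun f => (f.1 0).elim0⟩
  simp [hpoly]


lemma mono_snoc {k m : ℕ} (g : Fin k → Fin (m+1)) (hg : Monotone g) :
    Monotone (Fin.snoc g (Fin.last m)) := by
  intro i j hij
  induction j using Fin.lastCases with
  | last => simp [Fin.snoc_last, Fin.le_last]
  | cast j =>
    induction i using Fin.lastCases with
    | last =>
      exact absurd (lt_of_le_of_lt hij (Fin.castSucc_lt_last j)) (lt_irrefl _)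
    | cast i =>
      rw [Fin.snoc_castSucc, Fin.snoc_castSucc]
      exact hg (Fin.castSucc_le_castSucc_iff.mp hij)

def splitFun (m k : ℕ) :
    ({g : Fin (k+1) → Fin m // Monotone g} ⊕ {g : Fin k → Fin (m+1) // Monotone g})
      → {f : Fin (k+1) → Fin (m+1) // Monotone f}
  | Sum.inl g => ⟨Fin.castSucc ∘ g.1, fun i j h => Fin.castSucc_le_castSucc_iff.mpr (g.2 h)⟩
  | Sum.inr g => ⟨Fin.snoc g.1 (Fin.last m), mono_snoc g.1 g.2⟩

lemma splitFun_bij (m k : ℕ) : Function.Bijective (splitFun m k) := by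
  constructor
  · rintro (g | g) (g' | g') h
    · refine congrArg Sum.inl (Subtype.ext (funext fun i => ?_))
      have := congrFun (congrArg Subtype.val h) i
      exact Fin.castSucc_injective m this
    · have := congrFun (congrArg Subtype.val h) (Fin.last k)
      simp only [splitFun, Function.comp_apply, Fin.snoc_last] at this
      exact absurd this (ne_of_lt (Fin.castSucc_lt_last _))
    · have := congrFun (congrArg Subtype.val h) (Fin.last k)
      simp only [splitFun, Function.comp_apply, Fin.snoc_last] at this
      exact absurd this.symm (ne_of_lt (Fin.castSucc_lt_last _))
    · refine congrArg Sum.inr (Subtype.ext (funext fun i => ?_))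
      have := congrFun (congrArg Subtype.val h) (Fin.castSucc i)
      simpa only [splitFun, Fin.snoc_castSucc] using this
  · rintro ⟨f, hf⟩
    by_cases h : f (Fin.last k) = Fin.last m
    · refine ⟨Sum.inr ⟨f ∘ Fin.castSucc,
        hf.comp (fun i j hij => Fin.castSucc_le_castSucc_iff.mpr hij)⟩, ?_⟩
      refine Subtype.ext (funext fun i => ?_)
      induction i using Fin.lastCases with
      | last => simpa [splitFun, Fin.snoc_last] using h.symm
      | cast i => simp [splitFun, Fin.snoc_castSucc]
    · have hlt : ∀ i, f i < Fin.last m := fun i =>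
        lt_of_le_of_lt (hf (Fin.le_last i)) (lt_of_le_of_ne (Fin.le_last _) h)
      refine ⟨Sum.inl ⟨fun i => ⟨(f i).val, hlt i⟩, fun i j hij => hf hij⟩, ?_⟩
      exact Subtype.ext (funext fun i => rfl)

lemma hpoly_rec (m k : ℕ) (x : Fin (m+1) → ℝ) :
    hpoly (m+1) (k+1) x
      = hpoly m (k+1) (x ∘ Fin.castSucc) + x (Fin.last m) * hpoly (m+1) k x := by
  have key := Fintype.sum_bijective (splitFun m k) (splitFun_bij m k)
    (fun s => ∏ i : Fin (k+1), x ((splitFun m k s).1 i))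
    (fun f => ∏ i : Fin (k+1), x (f.1 i)) (fun s => rfl)
  rw [hpoly, ← key]
  refine (Fintype.sum_sum_type (fun s => ∏ i : Fin (k+1), x ((splitFun m k s).1 i))).trans ?_
  congr 1
  rw [hpoly, Finset.mul_sum]
  refine Finset.sum_congr rfl fun g _ => ?_
  rw [Fin.prod_univ_castSucc]
  simp only [splitFun, Fin.snoc_castSucc, Fin.snoc_last]
  ring

/-- Chaining the one-step strong log-concavity to a `d`-step version. -/
lemma lc_chain (a : ℕ → ℝ)
    (hlc : ∀ i j, i ≤ j → a i * a (j+1) ≤ a (i+1) * a j) :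
    ∀ d i j, i + d ≤ j + 1 → a i * a (j + d) ≤ a (i + d) * a j := by
  intro d
  induction d with
  | zero => intro i j _; ring_nf; exact le_refl _
  | succ d ih =>
    intro i j h
    calc a i * a (j + (d+1)) = a i * a ((j + d) + 1) := by ring_nf
      _ ≤ a (i+1) * a (j + d) := hlc i (j + d) (by omega)
      _ ≤ a ((i+1) + d) * a j := ih (i+1) j (by omega)
      _ = a (i + (d+1)) * a j := by ring_nf

/-- For pairs with equal sum, the product is larger when the indices are closer. -/
lemma lc_pair (a : ℕ → ℝ)
    (hlc : ∀ i j, i ≤ j → a i * a (j+1) ≤ a (i+1) * a j) :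
    ∀ p q p' q', p + q = p' + q' → p ≤ p' → p ≤ q' → q' ≤ q →
      a p * a q ≤ a p' * a q' := by
  intro p q p' q' hsum hp hq' hqq
  rcases le_total p' q' with h | h
  · have := lc_chain a hlc (p' - p) p q' (by omega)
    have e1 : q' + (p' - p) = q := by omega
    have e2 : p + (p' - p) = p' := by omega
    rw [e1, e2] at this
    exact this
  · have := lc_chain a hlc (q' - p) p p' (by omega)
    have e1 : p' + (q' - p) = q := by omega
    have e2 : p + (q' - p) = q' := by omega
    rw [e1, e2] at this
    calc a p * a q ≤ a q' * a p' := this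
      _ = a p' * a q' := by ring

lemma lc_step (a c : ℕ → ℝ) (t : ℝ) (ht : 0 ≤ t)
    (ha : ∀ n, 0 ≤ a n) (hc : ∀ n, 0 ≤ c n)
    (hc0 : c 0 = a 0)
    (hrec : ∀ n, c (n+1) = a (n+1) + t * c n)
    (hlc : ∀ i j, i ≤ j → a i * a (j+1) ≤ a (i+1) * a j) :
    ∀ i j, i ≤ j → c i * c (j+1) ≤ c (i+1) * c j := by
  have hclosed : ∀ n, c n = ∑ s ∈ Finset.range (n+1), t^(n-s) * a s := by
    intro n
    induction n with
    | zero => simpa using hc0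
    | succ n ih =>
      rw [hrec n, ih, Finset.mul_sum]
      have h1 : ∀ s ∈ Finset.range (n+1), t * (t^(n-s) * a s) = t^(n+1-s) * a s := by
        intro s hs
        rw [Finset.mem_range] at hs
        rw [← mul_assoc, ← pow_succ']
        congr 2
        omega
      rw [Finset.sum_congr rfl h1]
      have h2 : (∑ s ∈ Finset.range (n+1+1), t^(n+1-s) * a s)
          = (∑ s ∈ Finset.range (n+1), t^(n+1-s) * a s) + a (n+1) := by
        rw [Finset.sum_range_succ]
        simp
      rw [h2]
      ring
  -- key inequality: a (j+1) * c i ≤ a (i+1) * c j  for i ≤ j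
  have R : ∀ i j, i ≤ j → a (j+1) * c i ≤ a (i+1) * c j := by
    intro i j hij
    rw [hclosed i, hclosed j, Finset.mul_sum, Finset.mul_sum]
    have step1 : ∑ s ∈ Finset.range (i+1), a (j+1) * (t^(i-s) * a s)
        ≤ ∑ s ∈ Finset.range (i+1), a (i+1) * (t^(j-(s+(j-i))) * a (s+(j-i))) := by
      refine Finset.sum_le_sum fun s hs => ?_
      rw [Finset.mem_range] at hs
      have he : j - (s + (j-i)) = i - s := by omega
      rw [he]
      have hpair : a s * a (j+1) ≤ a (s+(j-i)) * a (i+1) :=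
        lc_pair a hlc s (j+1) (s+(j-i)) (i+1) (by omega) (by omega) (by omega) (by omega)
      calc a (j+1) * (t^(i-s) * a s) = t^(i-s) * (a s * a (j+1)) := by ring
        _ ≤ t^(i-s) * (a (s+(j-i)) * a (i+1)) :=
            mul_le_mul_of_nonneg_left hpair (pow_nonneg ht _)
        _ = a (i+1) * (t^(i-s) * a (s+(j-i))) := by ring
    refine step1.trans ?_
    have step2 : ∑ s ∈ Finset.range (i+1), a (i+1) * (t^(j-(s+(j-i))) * a (s+(j-i)))
        = ∑ u ∈ (Finset.range (i+1)).map (addRightEmbedding (j-i)),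
            a (i+1) * (t^(j-u) * a u) := by
      rw [Finset.sum_map]
      rfl
    rw [step2]
    refine Finset.sum_le_sum_of_subset_of_nonneg ?_ ?_
    · intro u hu
      simp only [Finset.mem_map, Finset.mem_range, addRightEmbedding_apply] at hu
      rw [Finset.mem_range]
      omega
    · intro u _ _
      exact mul_nonneg (ha _) (mul_nonneg (pow_nonneg ht _) (ha _))
  intro i j hij
  calc c i * c (j+1) = a (j+1) * c i + t * (c i * c j) := by rw [hrec j]; ring
    _ ≤ a (i+1) * c j + t * (c i * c j) :=
        add_le_add_left (R i j hij) _
    _ = c (i+1) * c j := by rw [hrec i]; ring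

/-- Strong log-concavity of the `h_k`, by induction on the number of variables. -/
lemma hpoly_strong_lc : ∀ (m : ℕ) (x : Fin m → ℝ), (∀ i, 0 ≤ x i) →
    ∀ i j, i ≤ j → hpoly m i x * hpoly m (j+1) x ≤ hpoly m (i+1) x * hpoly m j x := by
  intro m
  induction m with
  | zero =>
    intro x hx i j _
    rw [hpoly_zero_vars j x]
    have h1 : 0 ≤ hpoly 0 (i+1) x := hpoly_nonneg _ _ _ hx
    have h2 : 0 ≤ hpoly 0 j x := hpoly_nonneg _ _ _ hx
    nlinarith
  | succ m ih =>
    intro x hx i j hij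
    have hx' : ∀ i, 0 ≤ (x ∘ Fin.castSucc) i := fun i => hx _
    exact lc_step (fun n => hpoly m n (x ∘ Fin.castSucc)) (fun n => hpoly (m+1) n x)
      (x (Fin.last m)) (hx _)
      (fun n => hpoly_nonneg _ _ _ hx') (fun n => hpoly_nonneg _ _ _ hx)
      (by rw [hpoly_zero, hpoly_zero])
      (fun n => hpoly_rec m n x)
      (fun i j hij => ih (x ∘ Fin.castSucc) hx' i j hij)
      i j hij

/-- Log-concavity of the complete homogeneous symmetric polynomials at nonnegative
arguments: `h_{k+1}(x)² ≥ h_k(x) · h_{k+2}(x)` (a consequence of the Jacobi–Trudi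
identity, since `h_{k+1}² − h_k h_{k+2}` is the Schur function for `λ = (k+1,k+1)`). -/
theorem hpoly_log_concave (m : ℕ) (hm : 1 ≤ m) (x : Fin m → ℝ) (hx : ∀ i, 0 ≤ x i)
    (k : ℕ) (hk : 1 ≤ k) :
    hpoly m k x * hpoly m (k + 2) x ≤ (hpoly m (k + 1) x) ^ 2 := by
  have := hpoly_strong_lc m x hx k (k+1) (Nat.le_succ k)
  calc hpoly m k x * hpoly m (k + 2) x
      ≤ hpoly m (k+1) x * hpoly m (k+1) x := this
    _ = (hpoly m (k + 1) x) ^ 2 := (sq (hpoly m (k+1) x)).symm
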